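/- Telescoping bound along a trajectory: consider a finite-horizon episodic MDP, signed transition estimates P̂_h : S × A → (S → ℝ), and bonus functions b_h : S × A → [0,∞). Define V_{H+1} ≡ 0, Q_h(s,a) = min{ r_h(s,a) + ∑_{s'∈S} P̂_h(s'|s,a) V_{h+1}(s') + b_h(s,a), H }, V_h(s) = max_{a∈A} Q_h(s,a), and assume |∑_{s'∈S} (P̂_h(s'|s,a) − P_h(s'|s,a)) V_{h+1}(s')| ≤ b_h(s,a) for all h, s, a. Let π be a greedy policy with respect to Q, i.e. Q_h(s, π_h(s)) = max_{a} Q_h(s,a) for all h, s. Then for every sequence of states s_1, s_2, …, s_{H+1} ∈ S with actions a_h = π_h(s_h), and every h ∈ {1,…,H}: Q_h(s_h, a_h) − Q^π_h(s_h, a_h) ≤ ∑_{h'=h}^H ε_{h'} + 2 ∑_{h'=h}^H b_{h'}(s_{h'}, a_{h'}), where ε_{h'} = ∑_{s'∈S} P_{h'}(s'|s_{h'}, a_{h'}) (V_{h'+1}(s') − V^π_{h'+1}(s')) − (V_{h'+1}(s_{h'+1}) − V^π_{h'+1}(s_{h'+1})). -/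

import Mathlib

/-- **Telescoping bound along a trajectory.** In a finite-horizon episodic MDP (steps
`1, …, H` indexed by `0, …, H-1`), with optimistic iterates `Q`, `V` as in the one-step
recursion, a policy `π` greedy with respect to `Q`, and any state sequence
`st 0, st 1, …, st H` with actions `a h = π h (st h)`, for every `h < H`:
`Q h (st h) (a h) − Q^π h (st h) (a h) ≤ ∑_{h'=h}^{H-1} ε_{h'} + 2 ∑_{h'=h}^{H-1} bon h' (st h') (a h')`,
where `ε_{h'} = ∑_{s'} P h' (st h') (a h') s' · (V (h'+1) s' − V^π (h'+1) s')
− (V (h'+1) (st (h'+1)) − V^π (h'+1) (st (h'+1)))`. -/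
theorem stmt_10 {S A : Type*} [Fintype S] [Fintype A] [Nonempty A]
    (H : ℕ) (P : ℕ → S → A → S → ℝ)
    (hP0 : ∀ h s a s', 0 ≤ P h s a s')
    (hP1 : ∀ h s a, ∑ s', P h s a s' = 1)
    (r : ℕ → S → A → ℝ) (hr : ∀ h s a, r h s a ∈ Set.Icc (0 : ℝ) 1)
    (Phat : ℕ → S → A → S → ℝ)
    (bon : ℕ → S → A → ℝ) (hbon : ∀ h s a, 0 ≤ bon h s a)
    (Q : ℕ → S → A → ℝ) (V : ℕ → S → ℝ)
    (hVH : ∀ s, V H s = 0)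
    (hQ : ∀ h < H, ∀ s a,
      Q h s a = min (r h s a + ∑ s', Phat h s a s' * V (h + 1) s' + bon h s a) (H : ℝ))
    (hV : ∀ h < H, ∀ s,
      V h s = Finset.univ.sup' Finset.univ_nonempty (fun a => Q h s a))
    (hopt : ∀ h < H, ∀ s a,
      |∑ s', (Phat h s a s' - P h s a s') * V (h + 1) s'| ≤ bon h s a)
    (π : ℕ → S → A) (Vπ : ℕ → S → ℝ) (Qπ : ℕ → S → A → ℝ)
    (hVπH : ∀ s, Vπ H s = 0)
    (hQπ : ∀ h < H, ∀ s a, Qπ h s a = r h s a + ∑ s', P h s a s' * Vπ (h + 1) s')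
    (hVπ : ∀ h < H, ∀ s, Vπ h s = Qπ h s (π h s))
    (hgreedy : ∀ h < H, ∀ s,
      Q h s (π h s) = Finset.univ.sup' Finset.univ_nonempty (fun a => Q h s a))
    (st : ℕ → S) :
    ∀ h < H,
      Q h (st h) (π h (st h)) - Qπ h (st h) (π h (st h)) ≤
        (∑ h' ∈ Finset.Ico h H,
          ((∑ s', P h' (st h') (π h' (st h')) s' * (V (h' + 1) s' - Vπ (h' + 1) s')) -
            (V (h' + 1) (st (h' + 1)) - Vπ (h' + 1) (st (h' + 1))))) +
        2 * ∑ h' ∈ Finset.Ico h H, bon h' (st h') (π h' (st h')) := by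

  suffices key : ∀ k, ∀ h, h < H → H - h ≤ k →
      Q h (st h) (π h (st h)) - Qπ h (st h) (π h (st h)) ≤
        (∑ h' ∈ Finset.Ico h H,
          ((∑ s', P h' (st h') (π h' (st h')) s' * (V (h' + 1) s' - Vπ (h' + 1) s')) -
            (V (h' + 1) (st (h' + 1)) - Vπ (h' + 1) (st (h' + 1))))) +
        2 * ∑ h' ∈ Finset.Ico h H, bon h' (st h') (π h' (st h')) by
    intro h hh; exact key (H - h) h hh le_rfl
  intro k
  induction k with
  | zero => intro h hh hk; omega
  | succ k ih =>
    intro h hh hk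
    set s := st h with hs
    set a := π h (st h) with ha
    have hQle : Q h s a ≤ r h s a + ∑ s', Phat h s a s' * V (h+1) s' + bon h s a := by
      rw [hQ h hh]; exact min_le_left _ _
    have hsplit : ∑ s', Phat h s a s' * V (h+1) s' =
        (∑ s', (Phat h s a s' - P h s a s') * V (h+1) s')
          + ∑ s', P h s a s' * V (h+1) s' := by
      rw [← Finset.sum_add_distrib]
      exact Finset.sum_congr rfl (fun x _ => by ring)
    have habs := (abs_le.mp (hopt h hh s a)).2
    have hsub : ∑ s', P h s a s' * (V (h+1) s' - Vπ (h+1) s') =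
        (∑ s', P h s a s' * V (h+1) s') - ∑ s', P h s a s' * Vπ (h+1) s' := by
      rw [← Finset.sum_sub_distrib]
      exact Finset.sum_congr rfl (fun x _ => by ring)
    have h1 : Q h s a - Qπ h s a ≤
        (∑ s', P h s a s' * (V (h+1) s' - Vπ (h+1) s')) + 2 * bon h s a := by
      rw [hQπ h hh]; linarith
    have hΔ : V (h+1) (st (h+1)) - Vπ (h+1) (st (h+1)) ≤
        (∑ h' ∈ Finset.Ico (h+1) H,
          ((∑ s', P h' (st h') (π h' (st h')) s' * (V (h' + 1) s' - Vπ (h' + 1) s')) -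
            (V (h' + 1) (st (h' + 1)) - Vπ (h' + 1) (st (h' + 1))))) +
        2 * ∑ h' ∈ Finset.Ico (h+1) H, bon h' (st h') (π h' (st h')) := by
      rcases eq_or_lt_of_le (Nat.succ_le_of_lt hh) with heq | hlt
      · rw [show h+1 = H from heq, hVH, hVπH, Finset.Ico_self]; simp
      · have hV1 : V (h+1) (st (h+1)) = Q (h+1) (st (h+1)) (π (h+1) (st (h+1))) := by
          rw [hV (h+1) hlt, hgreedy (h+1) hlt]
        have hVπ1 := hVπ (h+1) hlt (st (h+1))
        rw [hV1, hVπ1]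
        exact ih (h+1) hlt (by omega)
    rw [Finset.sum_eq_sum_Ico_succ_bot hh, Finset.sum_eq_sum_Ico_succ_bot hh
      (fun h' => bon h' (st h') (π h' (st h')))]
    linarith
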